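/- Let F be a nonempty compact convex subset of ℝⁿ. Then the set of unit vectors c ∈ Sⁿ⁻¹ for which there exist a point x_c ∈ F and a constant δ_c > 0 such that c lies in the relative interior of the normal cone N_F(x_c) and ⟨c, x_c⟩ ≥ ⟨c, x⟩ + δ_c ‖x − x_c‖² for all x ∈ F, is dense in the unit sphere Sⁿ⁻¹. -/

import Mathlib

set_option maxHeartbeats 1000000

open Set

lemma aux_openSegment_intrinsic {E : Type*} [NormedAddCommGroup E] [NormedSpace ℝ E] {s : Set E}
    (hs : Convex ℝ s) {x y : E} (hx : x ∈ intrinsicInterior ℝ s) (hy : y ∈ s) :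
    openSegment ℝ x y ⊆ intrinsicInterior ℝ s := by
  obtain ⟨x', hx'int, rfl⟩ := hx
  haveI : Nonempty (affineSpan ℝ s) := ⟨⟨y, subset_affineSpan ℝ s hy⟩⟩
  set s'' : Set (affineSpan ℝ s).direction := {v | ((x' : E) - (v : E)) ∈ s} with hs''
  have hs''conv : Convex ℝ s'' := by
    intro u hu v hv a b ha hb hab
    show ((x' : E) - ((a • u + b • v : (affineSpan ℝ s).direction) : E)) ∈ s
    have h : ((x' : E) - ((a • u + b • v : (affineSpan ℝ s).direction) : E))
        = a • ((x' : E) - u) + b • ((x' : E) - v) := by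
      push_cast
      match_scalars <;> linarith
    rw [h]
    exact hs hu hv ha hb hab
  set e := AffineIsometryEquiv.constVSub ℝ x' with he
  have hco : ((x' -ᵥ · : affineSpan ℝ s → _)) = ⇑e := by
    rw [he, AffineIsometryEquiv.coe_constVSub]
  have hpre : (((↑) ⁻¹' s) : Set (affineSpan ℝ s)) = e ⁻¹' s'' := by
    ext q
    have h1 : ((e q : (affineSpan ℝ s).direction) : E) = (x' : E) - (q : E) := by
      rw [← hco]; exact AffineSubspace.coe_vsub _ x' q
    simp [hs'', Set.mem_setOf_eq, Set.mem_preimage, h1, sub_sub_cancel]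
  have hint : interior ((⇑e) ⁻¹' s'') = (⇑e) ⁻¹' (interior s'') := by
    rw [← AffineIsometryEquiv.coe_toHomeomorph, Homeomorph.preimage_interior]
  have h0 : (0 : (affineSpan ℝ s).direction) ∈ interior s'' := by
    have h := hx'int
    rw [hpre, hint] at h
    have hx'0 : e x' = 0 := by rw [← hco]; simp
    rw [Set.mem_preimage, hx'0] at h
    exact h
  set y' : affineSpan ℝ s := ⟨y, subset_affineSpan ℝ s hy⟩ with hy'
  have hyD : (x' -ᵥ y' : (affineSpan ℝ s).direction) ∈ s'' := by
    show ((x' : E) - ((x' -ᵥ y' : (affineSpan ℝ s).direction) : E)) ∈ s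
    rw [AffineSubspace.coe_vsub]
    simpa [hy'] using hy
  rintro z ⟨a, b, ha, hb, hab, rfl⟩
  have hzA : a • (x' : E) + b • y ∈ affineSpan ℝ s := by
    have h1 : b • (y -ᵥ (x' : E)) +ᵥ (x' : E) ∈ affineSpan ℝ s :=
      (affineSpan ℝ s).smul_vsub_vadd_mem b y'.2 x'.2 x'.2
    have h2 : b • (y -ᵥ (x' : E)) +ᵥ (x' : E) = a • (x' : E) + b • y := by
      simp only [vsub_eq_sub, vadd_eq_add]
      match_scalars <;> linarith
    rwa [h2] at h1
  refine ⟨⟨a • (x' : E) + b • y, hzA⟩, ?_, rfl⟩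
  rw [hpre, hint, Set.mem_preimage]
  have hez : e ⟨a • (x' : E) + b • y, hzA⟩ = b • (x' -ᵥ y') := by
    rw [Subtype.ext_iff]
    have h1 : ((e ⟨a • (x' : E) + b • y, hzA⟩ : (affineSpan ℝ s).direction) : E)
        = (x' : E) - (a • (x' : E) + b • y) := by
      rw [← hco]; exact AffineSubspace.coe_vsub _ x' _
    rw [h1]
    push_cast [AffineSubspace.coe_vsub, hy']
    simp only [vsub_eq_sub]
    match_scalars <;> linarith
  rw [hez]
  have hseg : b • (x' -ᵥ y') ∈ openSegment ℝ (0 : (affineSpan ℝ s).direction) (x' -ᵥ y') :=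
    ⟨a, b, ha, hb, hab, by simp⟩
  exact hs''conv.openSegment_interior_closure_subset_interior h0 (subset_closure hyD) hseg

theorem dense_strong_maximizer_ri_normal_cone (n : ℕ)
    (F : Set (EuclideanSpace ℝ (Fin n)))
    (hne : F.Nonempty) (hcomp : IsCompact F) (hconv : Convex ℝ F) :
    Metric.sphere (0 : EuclideanSpace ℝ (Fin n)) 1 ⊆
      closure {c : EuclideanSpace ℝ (Fin n) | ‖c‖ = 1 ∧
        ∃ xc ∈ F, ∃ δc > (0 : ℝ),
          c ∈ intrinsicInterior ℝ
              {d : EuclideanSpace ℝ (Fin n) | ∀ x' ∈ F, (inner ℝ d (x' - xc) : ℝ) ≤ 0} ∧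
          ∀ x ∈ F, (inner ℝ c x : ℝ) + δc * ‖x - xc‖ ^ 2 ≤ inner ℝ c xc} := by
  intro c₀ hc₀
  have hc₀n : ‖c₀‖ = 1 := by simpa using hc₀
  rw [Metric.mem_closure_iff]
  intro ε hε
  -- bound on F
  obtain ⟨M₀, hM₀⟩ := hcomp.isBounded.exists_norm_le
  set M : ℝ := max M₀ 0 with hMdef
  have hM : ∀ x ∈ F, ‖x‖ ≤ M := fun x hx => le_trans (hM₀ x hx) (le_max_left _ _)
  have hMnn : 0 ≤ M := le_max_right _ _
  -- the far center
  set t : ℝ := M + 1 + 6 * M / ε with htdef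
  have htpos : 0 < t := by positivity
  set z : EuclideanSpace ℝ (Fin n) := -(t • c₀) with hzdef
  -- farthest point
  obtain ⟨xt, hxtF, hmax⟩ := hcomp.exists_isMaxOn hne
    (Continuous.continuousOn ((continuous_id.sub continuous_const).norm))
  set R : ℝ := ‖xt - z‖ with hRdef
  have hxtM : ‖xt‖ ≤ M := hM xt hxtF
  have hxz : xt - z = xt + t • c₀ := by rw [hzdef]; abel
  have htR : |t - R| ≤ M := by
    have h1 := abs_norm_sub_norm_le (t • c₀) (xt + t • c₀)
    have hn : ‖t • c₀‖ = t := by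
      rw [norm_smul, hc₀n, Real.norm_eq_abs, abs_of_pos htpos, mul_one]
    have h2 : ‖t • c₀ - (xt + t • c₀)‖ = ‖xt‖ := by
      have h3 : t • c₀ - (xt + t • c₀) = -xt := by abel
      rw [h3, norm_neg]
    rw [hn, h2, ← hxz, ← hRdef] at h1
    have := abs_le.1 h1
    rw [abs_le]
    constructor <;> linarith [hxtM, this.1, this.2]
  have hRge : M + 1 + 6 * M / ε - M ≤ R := by
    have := abs_le.1 htR
    rw [← htdef]
    linarith [this.2]
  have hR1 : 1 ≤ R := by
    have : 1 ≤ M + 1 + 6 * M / ε - M := by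
      have : 0 ≤ 6 * M / ε := by positivity
      linarith
    linarith
  have hRpos : (0:ℝ) < R := by linarith
  set c₁ : EuclideanSpace ℝ (Fin n) := R⁻¹ • (xt - z) with hc₁def
  have hc₁n : ‖c₁‖ = 1 := by
    rw [hc₁def, norm_smul, Real.norm_eq_abs, abs_of_pos (inv_pos.2 hRpos), ← hRdef,
      inv_mul_cancel₀ (ne_of_gt hRpos)]
  -- quadratic decrease for c₁
  have hquad : ∀ x ∈ F, (inner ℝ c₁ (x - xt) : ℝ) ≤ -(1 / (2 * R)) * ‖x - xt‖ ^ 2 := by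
    intro x hx
    have hle : ‖x - z‖ ≤ R := hmax hx
    have hexp : ‖x - z‖ ^ 2 = ‖x - xt‖ ^ 2 + 2 * (inner ℝ (x - xt) (xt - z) : ℝ) + R ^ 2 := by
      have : x - z = (x - xt) + (xt - z) := by abel
      rw [this, norm_add_sq_real, hRdef]
    have hsq : ‖x - z‖ ^ 2 ≤ R ^ 2 := by
      have := norm_nonneg (x - z)
      nlinarith
    have hkey : (inner ℝ (x - xt) (xt - z) : ℝ) ≤ -(‖x - xt‖ ^ 2) / 2 := by nlinarith
    have hinner : (inner ℝ c₁ (x - xt) : ℝ) = R⁻¹ * (inner ℝ (x - xt) (xt - z) : ℝ) := by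
      rw [hc₁def, real_inner_smul_left, real_inner_comm]
    rw [hinner]
    have h2 : R⁻¹ * (inner ℝ (x - xt) (xt - z) : ℝ) ≤ R⁻¹ * (-(‖x - xt‖ ^ 2) / 2) :=
      mul_le_mul_of_nonneg_left hkey (inv_nonneg.2 hRpos.le)
    calc R⁻¹ * (inner ℝ (x - xt) (xt - z) : ℝ) ≤ R⁻¹ * (-(‖x - xt‖ ^ 2) / 2) := h2
      _ = -(1 / (2 * R)) * ‖x - xt‖ ^ 2 := by rw [one_div, mul_inv]; ring
  -- c₁ is close to c₀
  have hd1 : ‖c₁ - c₀‖ < ε / 3 := by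
    have hsplit : c₁ - c₀ = R⁻¹ • xt + (R⁻¹ * t - 1) • c₀ := by
      rw [hc₁def, hxz, smul_add, smul_smul]
      module
    have hnb : ‖c₁ - c₀‖ ≤ R⁻¹ * M + |t - R| / R := by
      rw [hsplit]
      refine le_trans (norm_add_le _ _) ?_
      have e1 : ‖R⁻¹ • xt‖ ≤ R⁻¹ * M := by
        rw [norm_smul, Real.norm_eq_abs, abs_of_pos (inv_pos.2 hRpos)]
        exact mul_le_mul_of_nonneg_left hxtM (inv_nonneg.2 hRpos.le)
      have e2 : ‖(R⁻¹ * t - 1) • c₀‖ = |t - R| / R := by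
        rw [norm_smul, hc₀n, mul_one, Real.norm_eq_abs]
        have h4 : R⁻¹ * t - 1 = (t - R) / R := by field_simp
        rw [h4, abs_div, abs_of_pos hRpos]
      linarith [e1, e2.le]
    have hb2 : R⁻¹ * M + |t - R| / R ≤ 2 * M / R := by
      rw [inv_mul_eq_div, ← add_div]
      exact (div_le_div_iff_of_pos_right hRpos).2 (by linarith)
    have hfin : 2 * M / R < ε / 3 := by
      rw [div_lt_div_iff₀ hRpos (by norm_num : (0:ℝ) < 3)]
      have h6 : 6 * M < ε * R := by
        have h1 : ε * (1 + 6 * M / ε) ≤ ε * R := by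
          apply mul_le_mul_of_nonneg_left _ hε.le
          linarith [hRge]
        have h2 : ε * (1 + 6 * M / ε) = ε + 6 * M := by field_simp
        linarith
      linarith
    linarith
  -- the normal cone
  set N : Set (EuclideanSpace ℝ (Fin n)) :=
    {d | ∀ x' ∈ F, (inner ℝ d (x' - xt) : ℝ) ≤ 0} with hNdef
  have hNconv : Convex ℝ N := by
    intro d₁ h₁ d₂ h₂ a b ha hb hab
    intro x' hx'
    have := h₁ x' hx'
    have := h₂ x' hx'
    rw [inner_add_left, real_inner_smul_left, real_inner_smul_left]
    nlinarith
  have hscale : ∀ r : ℝ, 0 ≤ r → ∀ d ∈ N, r • d ∈ N := by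
    intro r hr d hd x' hx'
    rw [real_inner_smul_left]
    exact mul_nonpos_of_nonneg_of_nonpos hr (hd x' hx')
  have h0N : (0 : EuclideanSpace ℝ (Fin n)) ∈ N := by
    intro x' hx'; simp [inner_zero_left]
  have hc₁N : c₁ ∈ N := by
    intro x' hx'
    have := hquad x' hx'
    have h2R : (0:ℝ) < 1 / (2 * R) := by positivity
    linarith [mul_nonneg h2R.le (sq_nonneg ‖x' - xt‖)]
  -- a point in the intrinsic interior
  obtain ⟨c₂, hc₂⟩ := Set.Nonempty.intrinsicInterior hNconv ⟨0, h0N⟩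
  set s : ℝ := min (ε / (6 * (‖c₂ - c₁‖ + 1))) (1 / (2 * (‖c₂ - c₁‖ + 1))) with hsdef
  have hKpos : (0:ℝ) < ‖c₂ - c₁‖ + 1 := by positivity
  have hspos : 0 < s := lt_min (by positivity) (by positivity)
  have hsK1 : s * (‖c₂ - c₁‖ + 1) ≤ ε / 6 := by
    have h1 : s ≤ ε / (6 * (‖c₂ - c₁‖ + 1)) := min_le_left _ _
    have := mul_le_mul_of_nonneg_right h1 hKpos.le
    calc s * (‖c₂ - c₁‖ + 1) ≤ ε / (6 * (‖c₂ - c₁‖ + 1)) * (‖c₂ - c₁‖ + 1) := this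
      _ = ε / 6 := by field_simp
  have hsK2 : s * (‖c₂ - c₁‖ + 1) ≤ 1 / 2 := by
    have h1 : s ≤ 1 / (2 * (‖c₂ - c₁‖ + 1)) := min_le_right _ _
    have := mul_le_mul_of_nonneg_right h1 hKpos.le
    calc s * (‖c₂ - c₁‖ + 1) ≤ 1 / (2 * (‖c₂ - c₁‖ + 1)) * (‖c₂ - c₁‖ + 1) := this
      _ = 1 / 2 := by field_simp
  have hs1 : s < 1 := by
    have := mul_nonneg hspos.le (norm_nonneg (c₂ - c₁))
    nlinarith [hsK2]
  -- the perturbed direction inside the relative interior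
  set c' : EuclideanSpace ℝ (Fin n) := (1 - s) • c₁ + s • c₂ with hc'def
  have hc'ri : c' ∈ intrinsicInterior ℝ N := by
    apply aux_openSegment_intrinsic hNconv hc₂ hc₁N
    exact ⟨s, 1 - s, hspos, by linarith, by ring, by rw [hc'def]; module⟩
  have hc'c₁ : c' - c₁ = s • (c₂ - c₁) := by rw [hc'def]; module
  have hn' : ‖c' - c₁‖ = s * ‖c₂ - c₁‖ := by
    rw [hc'c₁, norm_smul, Real.norm_eq_abs, abs_of_pos hspos]
  have hexp : s * (‖c₂ - c₁‖ + 1) = s * ‖c₂ - c₁‖ + s := by ring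
  have e6 : ‖c' - c₁‖ ≤ ε / 6 := by rw [hn']; linarith
  have e2 : ‖c' - c₁‖ ≤ 1 / 2 := by rw [hn']; linarith
  have hc'norm : 1 / 2 ≤ ‖c'‖ := by
    have h1 := norm_sub_norm_le c₁ c'
    rw [norm_sub_rev] at h1
    linarith [hc₁n.le, hc₁n.ge]
  have hc'pos : 0 < ‖c'‖ := by linarith
  have hc'ne : ‖c'‖ ≠ 0 := ne_of_gt hc'pos
  set a : ℝ := ‖c'‖⁻¹ with hadef
  have hapos : 0 < a := inv_pos.2 hc'pos
  set cS : EuclideanSpace ℝ (Fin n) := a • c' with hcSdef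
  have hcSn : ‖cS‖ = 1 := by
    rw [hcSdef, norm_smul, Real.norm_eq_abs, abs_of_pos hapos, hadef,
      inv_mul_cancel₀ hc'ne]
  have hcSri : cS ∈ intrinsicInterior ℝ N := by
    rcases lt_trichotomy a 1 with h | h | h
    · apply aux_openSegment_intrinsic hNconv hc'ri h0N
      exact ⟨a, 1 - a, hapos, by linarith, by ring, by rw [hcSdef]; module⟩
    · rw [hcSdef, h, one_smul]; exact hc'ri
    · have hmem2 : (a + 1) • c' ∈ N :=
        hscale (a + 1) (by linarith) c' (intrinsicInterior_subset hc'ri)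
      apply aux_openSegment_intrinsic hNconv hc'ri hmem2
      refine ⟨1 / a, (a - 1) / a, by positivity, div_pos (by linarith) hapos,
        by field_simp; ring, ?_⟩
      rw [smul_smul, ← add_smul]
      have hco : 1 / a + (a - 1) / a * (a + 1) = a := by field_simp; ring
      rw [hco, hcSdef]
  set δ : ℝ := a * (1 - s) * (1 / (2 * R)) with hδdef
  have hδpos : 0 < δ := by
    have : 0 < 1 - s := by linarith
    positivity
  have hquadS : ∀ x ∈ F, (inner ℝ cS (x - xt) : ℝ) ≤ -δ * ‖x - xt‖ ^ 2 := by
    intro x hx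
    have h1 := hquad x hx
    have h2 : (inner ℝ c₂ (x - xt) : ℝ) ≤ 0 := (intrinsicInterior_subset hc₂) x hx
    have hx1 : (inner ℝ cS (x - xt) : ℝ)
        = a * (1 - s) * (inner ℝ c₁ (x - xt) : ℝ) + a * s * (inner ℝ c₂ (x - xt) : ℝ) := by
      simp only [hcSdef, hc'def, inner_add_left, real_inner_smul_left]
      ring
    have has : 0 ≤ a * (1 - s) := le_of_lt (mul_pos hapos (by linarith))
    have eA := mul_le_mul_of_nonneg_left h1 has
    have eB : a * s * (inner ℝ c₂ (x - xt) : ℝ) ≤ 0 :=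
      mul_nonpos_of_nonneg_of_nonpos (mul_pos hapos hspos).le h2
    have hr : a * (1 - s) * (-(1 / (2 * R)) * ‖x - xt‖ ^ 2) = -δ * ‖x - xt‖ ^ 2 := by
      rw [hδdef]; ring
    rw [hx1]
    linarith [eA, eB, hr.le, hr.ge]
  have hcSd : dist c₀ cS < ε := by
    rw [dist_eq_norm]
    have hsplit : c₀ - cS = (c₀ - c₁) + (c₁ - c') + (c' - cS) := by abel
    have h8 : ‖c' - cS‖ ≤ ε / 6 := by
      have h9 : c' - cS = (1 - a) • c' := by rw [hcSdef]; module
      have h10 : ‖c' - cS‖ = |‖c'‖ - 1| := by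
        rw [h9, norm_smul, Real.norm_eq_abs]
        have hone : a * ‖c'‖ = 1 := by rw [hadef, inv_mul_cancel₀ hc'ne]
        have habs : |1 - a| * ‖c'‖ = |(1 - a) * ‖c'‖| := by
          rw [abs_mul, abs_of_nonneg (norm_nonneg c')]
        rw [habs]
        congr 1
        linear_combination -hone
      have h11 : |‖c'‖ - 1| ≤ ‖c' - c₁‖ := by
        have := abs_norm_sub_norm_le c' c₁
        rw [hc₁n] at this
        exact this
      linarith
    have h12 : ‖c₁ - c'‖ = ‖c' - c₁‖ := norm_sub_rev _ _
    have h13 : ‖c₀ - cS‖ ≤ ‖c₀ - c₁‖ + ‖c₁ - c'‖ + ‖c' - cS‖ := by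
      rw [hsplit]; exact norm_add₃_le
    have h14 : ‖c₀ - c₁‖ = ‖c₁ - c₀‖ := norm_sub_rev _ _
    linarith
  refine ⟨cS, ⟨hcSn, xt, hxtF, δ, hδpos, hcSri, ?_⟩, hcSd⟩
  intro x hx
  have h1 := hquadS x hx
  rw [inner_sub_right] at h1
  nlinarith [h1]
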